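/- For every swap sequence that transforms the initial placement of the constructed token swapping instance into its target placement, the total number of moves (which is twice the number of swaps) equals Σ_{t∈A} d_t + 2·Σ_t c_t, where the second sum ranges over all tokens. -/

import Mathlib

namespace UnweightedTS

/-- Vertices of the constructed tree: the root, ordering-gadget vertices `ord d`
(distance `d+1` from the root), slot-gadget path vertices `slot i d` (distance `d+1`
from the root in slot gadget `i`), and nooks.  (Coordinates range over all of `ℕ`;
the graph below only has edges between the vertices of the construction, so the
remaining vertices are isolated and carry no tokens.) -/
inductive Vtx (m : ℕ) where
  | root : Vtx m
  | ord : ℕ → Vtx m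
  | slot : Fin m → ℕ → Vtx m
  | nook : Fin m → Vtx m
deriving DecidableEq

/-- Adjacency generator for the tree: `len i` = length of the path of slot gadget `i`,
`lenOrd` = length of the ordering path, `nd` = distance from the root of the path
vertex to which the nook of each slot gadget is attached. -/
def rel {m : ℕ} (len : Fin m → ℕ) (lenOrd nd : ℕ) : Vtx m → Vtx m → Prop
  | .root, .ord d => d = 0 ∧ 0 < lenOrd
  | .ord d, .ord d' => d' = d + 1 ∧ d' < lenOrd
  | .root, .slot i d => d = 0 ∧ 0 < len i
  | .slot i d, .slot i' d' => i = i' ∧ d' = d + 1 ∧ d' < len i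
  | .slot i d, .nook i' => i = i' ∧ d + 1 = nd ∧ d < len i
  | _, _ => False

/-- The constructed tree, as a simple graph. -/
def Tree {m : ℕ} (len : Fin m → ℕ) (lenOrd nd : ℕ) : SimpleGraph (Vtx m) :=
  SimpleGraph.fromRel (rel len lenOrd nd)

/-- Swap the two values `e.1`, `e.2`. -/
def swapV {V : Type*} [DecidableEq V] (e : V × V) (v : V) : V :=
  if v = e.1 then e.2 else if v = e.2 then e.1 else v

/-- Apply a sequence of swaps to a token placement (token ↦ vertex). -/
def applySwaps {T V : Type*} [DecidableEq V] (σ : List (V × V)) (f : T → V) : T → V :=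
  σ.foldl (fun g e => fun t => swapV e (g t)) f

/-- Apply a sequence of star swaps (each given by a leaf) to a placement on the star
with center `none` and leaves `some l`. -/
def starApply {L : Type*} [DecidableEq L] (σ : List L) (f : Option L → Option L) :
    Option L → Option L :=
  σ.foldl (fun g l => fun t => swapV ((none : Option L), some l) (g t)) f

/-- The Star STS instance is a YES instance. -/
def StarSTSYes {L : Type*} [DecidableEq L] (π : Equiv.Perm (Option L)) (σ : List L) : Prop :=
  ∃ σ' : List L, σ'.Sublist σ ∧ starApply σ' id = ⇑π

/-- `k = (mn)^25`, the length of a big segment. -/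
def kk (m n : ℕ) : ℕ := (m * n) ^ 25

/-- `k' = k / n^8`, the length of a padding segment. -/
def kk' (m n : ℕ) : ℕ := kk m n / n ^ 8

variable {m n : ℕ}

/-- `nᵢ`: the number of occurrences of slot `i` in the swap sequence. -/
def cnt (s : Fin n → Fin m) (i : Fin m) : ℕ :=
  (Finset.univ.filter fun j : Fin n => s j = i).card

/-- Length of the ordering path: `nk + nmk'`. -/
def lenOrd (m n : ℕ) : ℕ := n * kk m n + n * m * kk' m n

/-- Length of the path of slot gadget `i`: `nᵢ k + n k'`. -/
def lenSlot (s : Fin n → Fin m) (i : Fin m) : ℕ := cnt s i * kk m n + n * kk' m n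

/-- The non-item tokens: big segments `xⱼ`, `yⱼ` of `k` tokens each, and padding
segments `p_{i,j}`, `q_{i,j}` of `k'` tokens each (in this order of the sum). -/
abbrev NonItem (m n : ℕ) :=
  (Fin n × Fin (kk m n)) ⊕ (Fin n × Fin (kk m n)) ⊕
    (Fin m × Fin n × Fin (kk' m n)) ⊕ (Fin m × Fin n × Fin (kk' m n))

/-- All tokens: item tokens (`Option (Fin m)`, `none` = item 0) and the non-item
tokens. -/
abbrev Tok (m n : ℕ) := Option (Fin m) ⊕ NonItem m n

/-- The constructed tree: ordering path of length `nk + nmk'`, slot path `i` of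
length `nᵢk + nk'`, nooks attached at distance `k` from the root. -/
def TheGraph (s : Fin n → Fin m) : SimpleGraph (Vtx m) :=
  Tree (lenSlot s) (lenOrd m n) (kk m n)

/-- The distance from the root, in slot gadget `i`, at which the block of segment
`q_{i,j}` (preceded by `yⱼ` when `s j = i`) starts in the initial configuration. -/
def offQ (s : Fin n → Fin m) (i : Fin m) (j : Fin n) : ℕ :=
  ∑ j' ∈ Finset.univ.filter (fun j' : Fin n => j'.val < j.val),
    (kk' m n + if s j' = i then kk m n else 0)

/-- The slot occurring next after position `j` in the swap sequence, if any. -/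
def nxt (s : Fin n → Fin m) (j : Fin n) : Option (Fin m) :=
  if h : j.val + 1 < n then some (s ⟨j.val + 1, h⟩) else none

/-- The rank (`0`-based position) of the padding segment `q_{i,j}` among the `m`
padding segments following `yⱼ` in the target configuration of the ordering gadget:
`q_{s_{j+1},j}` first, `q_{s_j,j}` last, and the others in increasing order of `i`. -/
def rho (s : Fin n → Fin m) (i : Fin m) (j : Fin n) : ℕ :=
  if some i = nxt s j then 0
  else if i = s j then m - 1
  else (if (nxt s j).isSome then 1 else 0) +
    (Finset.univ.filter fun i' : Fin m =>
      i'.val < i.val ∧ i' ≠ s j ∧ some i' ≠ nxt s j).card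

/-- The distance from the root, in slot gadget `i`, at which the block of segment
`p_{i,j}` (followed by `xⱼ` when `s j = i`) starts in the target configuration. -/
def tOffP (s : Fin n → Fin m) (i : Fin m) (j : Fin n) : ℕ :=
  ∑ j' ∈ Finset.univ.filter (fun j' : Fin n => j.val < j'.val),
    (kk' m n + if s j' = i then kk m n else 0)

/-- The initial placement of the tokens.  Item `0` is at the root and item `i` at the
nook of slot gadget `i`.  The ordering gadget contains, from the root outward, the
blocks `x₁, p_{·,1}, x₂, p_{·,2}, …, xₙ, p_{·,n}` (the `m` padding blocks after `xⱼ`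
ordered by `rho`); slot gadget `i` contains, from the root outward, the blocks
`q_{i,1},…,q_{i,n}` with `yⱼ` inserted immediately on the root side of `q_{i,j}`
whenever `s j = i`.  Within a segment the coordinate `a` increases away from the root
in slot gadgets and away from the root in the ordering gadget. -/
def initTok (s : Fin n → Fin m) : Tok m n → Vtx m
  | Sum.inl none => .root
  | Sum.inl (some i) => .nook i
  | Sum.inr (Sum.inl (j, a)) => .ord (j.val * (kk m n + m * kk' m n) + a.val)
  | Sum.inr (Sum.inr (Sum.inl (j, a))) => .slot (s j) (offQ s (s j) j + a.val)
  | Sum.inr (Sum.inr (Sum.inr (Sum.inl (i, j, a)))) =>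
      .ord (j.val * (kk m n + m * kk' m n) + kk m n + rho s i j * kk' m n + a.val)
  | Sum.inr (Sum.inr (Sum.inr (Sum.inr (i, j, a)))) =>
      .slot i (offQ s i j + (if s j = i then kk m n else 0) + a.val)

/-- The target placement of the tokens.  Item `o` goes to the position of item `π o`;
the ordering gadget contains, from its far end toward the root, the blocks
`y₁, q_{·,1}, y₂, q_{·,2}, …, yₙ, q_{·,n}` (the `m` padding blocks after `yⱼ` ordered
by `rho`); slot gadget `i` contains, from the root outward, the blocks
`p_{i,n},…,p_{i,1}` with `xⱼ` inserted immediately after (away from the root)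
`p_{i,j}` whenever `s j = i`.  The left-to-right order of the tokens within each
segment is the same as in the initial configuration. -/
def tgtTok (s : Fin n → Fin m) (π : Equiv.Perm (Option (Fin m))) : Tok m n → Vtx m
  | Sum.inl o => (match π o with | none => .root | some i => .nook i)
  | Sum.inr (Sum.inl (j, a)) =>
      .slot (s j) (tOffP s (s j) j + kk' m n + (kk m n - 1 - a.val))
  | Sum.inr (Sum.inr (Sum.inl (j, a))) =>
      .ord (lenOrd m n - 1 - (j.val * (kk m n + m * kk' m n) + a.val))
  | Sum.inr (Sum.inr (Sum.inr (Sum.inl (i, j, a)))) =>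
      .slot i (tOffP s i j + (kk' m n - 1 - a.val))
  | Sum.inr (Sum.inr (Sum.inr (Sum.inr (i, j, a)))) =>
      .ord (lenOrd m n - 1 -
        (j.val * (kk m n + m * kk' m n) + kk m n + rho s i j * kk' m n + a.val))

/-- `d_t`: the tree distance between token `t`'s initial and target vertices. -/
noncomputable def dd (s : Fin n → Fin m) (π : Equiv.Perm (Option (Fin m)))
    (t : Tok m n) : ℕ :=
  (TheGraph s).dist (initTok s t) (tgtTok s π t)

end UnweightedTS

namespace UnweightedTS

variable {m n : ℕ}

/-- The placement after the first `τ` swaps of `σ` (time `τ`). -/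
def placeAt (σ : List (Vtx m × Vtx m)) (f : Tok m n → Vtx m) (τ : ℕ) : Tok m n → Vtx m :=
  applySwaps (σ.take τ) f

/-- `isLeftMove u v` holds when a token moving across an edge from `u` to `v` makes a
*left* move: towards the root within a slot gadget (including out of a nook), or away
from the root within the ordering gadget. -/
def isLeftMove : Vtx m → Vtx m → Bool
  | .root, .ord _ => true
  | .ord _, .root => false
  | .ord d, .ord d' => decide (d < d')
  | .root, .slot _ _ => false
  | .slot _ _, .root => true
  | .slot _ d, .slot _ d' => decide (d' < d)
  | .nook _, .slot _ _ => true
  | .slot _ _, .nook _ => false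
  | _, _ => false

/-- A token of a `y` or `q` segment (initial vertex in a slot gadget). -/
def isSlotTok : Tok m n → Prop
  | Sum.inr (Sum.inr (Sum.inl _)) => True
  | Sum.inr (Sum.inr (Sum.inr (Sum.inr _))) => True
  | _ => False

/-- A token of an `x` or `p` segment (initial vertex in the ordering gadget). -/
def isNonSlotTok : Tok m n → Prop
  | Sum.inr (Sum.inl _) => True
  | Sum.inr (Sum.inr (Sum.inr (Sum.inl _))) => True
  | _ => False

/-- `isContrary t u v` holds when a move of token `t` from `u` to `v` is a *contrary*
move: a right move of a slot token, a right move of an item token, or a left move of a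
non-slot token. -/
def isContrary (t : Tok m n) (u v : Vtx m) : Bool :=
  match t with
  | Sum.inr (Sum.inl _) => isLeftMove u v
  | Sum.inr (Sum.inr (Sum.inr (Sum.inl _))) => isLeftMove u v
  | _ => !isLeftMove u v

/-- `c_t`: the number of contrary moves made by token `t` during the swap sequence
(starting from the placement `f`). -/
def cCount (t : Tok m n) : List (Vtx m × Vtx m) → (Tok m n → Vtx m) → ℕ
  | [], _ => 0
  | e :: rest, f =>
      ((if f t = e.1 ∧ isContrary t e.1 e.2 = true then 1 else 0) +
        (if f t = e.2 ∧ isContrary t e.2 e.1 = true then 1 else 0)) +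
        cCount t rest (fun t' => swapV e (f t'))

/-- Membership of a vertex in a gadget (`none` = the ordering gadget, `some i` = slot
gadget `i`, which includes its nook).  The root belongs to no gadget. -/
def memGadget : Vtx m → Option (Fin m) → Prop
  | .ord _, none => True
  | .slot i _, some i' => i = i'
  | .nook i, some i' => i = i'
  | _, _ => False

/-- The pair of tokens `t₁`, `t₂` is exchanged by the swap at step `idx` of `σ`. -/
def swapsPairAt (σ : List (Vtx m × Vtx m)) (f : Tok m n → Vtx m) (idx : ℕ)
    (t₁ t₂ : Tok m n) : Prop :=
  ∃ h : idx < σ.length,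
    (placeAt σ f idx t₁ = (σ.get ⟨idx, h⟩).1 ∧ placeAt σ f idx t₂ = (σ.get ⟨idx, h⟩).2) ∨
    (placeAt σ f idx t₁ = (σ.get ⟨idx, h⟩).2 ∧ placeAt σ f idx t₂ = (σ.get ⟨idx, h⟩).1)

/-- No pair of tokens swaps with each other more than once during `σ`. -/
def MinimalSeq (σ : List (Vtx m × Vtx m)) (f : Tok m n → Vtx m) : Prop :=
  ∀ (t₁ t₂ : Tok m n) (i₁ i₂ : ℕ), i₁ < i₂ →
    swapsPairAt σ f i₁ t₁ t₂ → ¬ swapsPairAt σ f i₂ t₁ t₂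

/-- The gadget containing a vertex, if any. -/
def gadgetOfV : Vtx m → Option (Fin m)
  | .slot i _ => some i
  | .nook i => some i
  | _ => none

/-- The free item token at time `τ`: the item token that was most recently at the
root (initially item `0`, i.e. `none`). -/
noncomputable def freeAt (σ : List (Vtx m × Vtx m)) (f : Tok m n → Vtx m) :
    ℕ → Option (Fin m)
  | 0 => none
  | τ + 1 =>
      if h : ∃ o : Option (Fin m), placeAt σ f (τ + 1) (Sum.inl o) = Vtx.root then
        h.choose
      else freeAt σ f τ

/-- The exchange sequence `χ` built from the first `τ` steps: each time an item token
that was just in slot gadget `i` becomes the new free item token, `i` is appended. -/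
noncomputable def chiList (σ : List (Vtx m × Vtx m)) (f : Tok m n → Vtx m) :
    ℕ → List (Fin m)
  | 0 => []
  | τ + 1 =>
      chiList σ f τ ++
        (if freeAt σ f (τ + 1) ≠ freeAt σ f τ then
          (match gadgetOfV (placeAt σ f τ (Sum.inl (freeAt σ f (τ + 1)))) with
            | some i => [i]
            | none => [])
        else [])

end UnweightedTS

namespace UnweightedTS

lemma swapV_eq {V : Type*} [DecidableEq V] (e : V × V) :
    swapV e = ⇑(Equiv.swap e.1 e.2) := by
  funext v; simp [swapV, Equiv.swap_apply_def]

/-- The potential: signed depth. -/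
def hgt (k : ℕ) : Vtx m → ℤ
  | .root => 0
  | .ord d => -(d + 1 : ℤ)
  | .slot _ d => (d : ℤ) + 1
  | .nook _ => (k : ℤ) + 1

variable {m n : ℕ}

lemma tree_adj {len : Fin m → ℕ} {L k : ℕ} {u v : Vtx m} :
    (Tree len L k).Adj u v ↔ u ≠ v ∧ (rel len L k u v ∨ rel len L k v u) := by
  simp [Tree, SimpleGraph.fromRel_adj]

lemma h_step {len : Fin m → ℕ} {L k : ℕ} {u v : Vtx m}
    (h : (Tree len L k).Adj u v) :
    hgt k v = hgt k u + (if isLeftMove u v then -1 else 1) := by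
  rw [tree_adj] at h
  obtain ⟨hne, h | h⟩ := h <;> rcases u with _ | d | ⟨i, d⟩ | i <;>
      rcases v with _ | d' | ⟨i', d'⟩ | i' <;>
      simp_all [rel, hgt, isLeftMove] <;> omega

variable {m n : ℕ}

/-- Sign of a token: `-1` for non-slot tokens (`x`, `p` segments), `+1` otherwise. -/
def sgn : Tok m n → ℤ
  | Sum.inr (Sum.inl _) => -1
  | Sum.inr (Sum.inr (Sum.inr (Sum.inl _))) => -1
  | _ => 1

lemma contrary_val {len : Fin m → ℕ} {L k : ℕ} {u v : Vtx m} (t : Tok m n)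
    (h : (Tree len L k).Adj u v) :
    sgn t * (hgt k v - hgt k u) = (if isContrary t u v then 1 else -1) := by
  have hs := h_step h
  rcases t with (_ | i) | (x | (y | (p | q))) <;>
    · simp only [sgn, isContrary, hs]
      by_cases hb : isLeftMove u v = true <;> simp [hb] <;> ring

variable {m n : ℕ}

/-- The set of genuine vertices of the construction. -/
def SV (s : Fin n → Fin m) : Finset (Vtx m) :=
  (({Vtx.root} : Finset (Vtx m)) ∪ (Finset.range (lenOrd m n)).image Vtx.ord ∪
    (Finset.univ : Finset (Fin m)).biUnion
      (fun i => (Finset.range (lenSlot s i)).image (Vtx.slot i))) ∪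
  (Finset.univ : Finset (Fin m)).image Vtx.nook

lemma mem_SV {s : Fin n → Fin m} {v : Vtx m} :
    v ∈ SV s ↔ (match v with
      | .root => True
      | .ord d => d < lenOrd m n
      | .slot i d => d < lenSlot s i
      | .nook _ => True) := by
  rcases v with _ | d | ⟨i, d⟩ | i <;> simp [SV]

lemma card_SV (s : Fin n → Fin m) :
    (SV s).card = 1 + lenOrd m n + (∑ i, lenSlot s i) + m := by
  rw [SV]
  rw [Finset.card_union_of_disjoint, Finset.card_union_of_disjoint,
    Finset.card_union_of_disjoint]
  · have h1 : (Finset.image (Vtx.ord (m := m)) (Finset.range (lenOrd m n))).card = lenOrd m n := by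
      rw [Finset.card_image_of_injective _ (fun a b h => by injection h), Finset.card_range]
    have h2 : (Finset.image (Vtx.nook (m := m)) Finset.univ).card = m := by
      rw [Finset.card_image_of_injective _ (fun a b h => by injection h),
        Finset.card_univ, Fintype.card_fin]
    have h3 : (Finset.univ.biUnion
        (fun i => (Finset.range (lenSlot s i)).image (Vtx.slot i))).card
        = ∑ i, lenSlot s i := by
      rw [Finset.card_biUnion]
      · apply Finset.sum_congr rfl
        intro i _
        rw [Finset.card_image_of_injective _
          (fun a b (h : Vtx.slot _ a = Vtx.slot _ b) => by injection h), Finset.card_range]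
      · intro i _ i' _ hne
        simp only [Finset.disjoint_left, Finset.mem_image, Finset.mem_range]
        rintro v ⟨a, _, rfl⟩ ⟨b, _, hb⟩
        exact hne (by injection hb with h1 h2; exact h1.symm)
    rw [h1, h2, h3, Finset.card_singleton]
  · simp [Finset.disjoint_left]
  · simp only [Finset.disjoint_left, Finset.mem_union, Finset.mem_singleton,
      Finset.mem_image, Finset.mem_biUnion, Finset.mem_range]
    rintro v (rfl | ⟨a, _, rfl⟩) ⟨i, _, h⟩ <;> simp_all
  · simp only [Finset.disjoint_left, Finset.mem_union, Finset.mem_singleton,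
      Finset.mem_image, Finset.mem_biUnion, Finset.mem_range]
    rintro v ((rfl | ⟨a, _, rfl⟩) | ⟨i, _, a, _, rfl⟩) ⟨i', _, h⟩ <;> simp_all

lemma sum_cnt (s : Fin n → Fin m) : ∑ i, cnt s i = n := by
  have := Finset.card_eq_sum_card_fiberwise
    (f := s) (s := Finset.univ) (t := Finset.univ) (fun j _ => Finset.mem_univ _)
  simpa [cnt] using this.symm

lemma sum_lenSlot (s : Fin n → Fin m) :
    ∑ i, lenSlot s i = n * kk m n + m * (n * kk' m n) := by
  simp only [lenSlot, Finset.sum_add_distrib, ← Finset.sum_mul, sum_cnt,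
    Finset.sum_const, Finset.card_univ, Fintype.card_fin, smul_eq_mul]
  ring

lemma card_Tok (s : Fin n → Fin m) : Fintype.card (Tok m n) = (SV s).card := by
  rw [card_SV, sum_lenSlot]
  simp [lenOrd, Fintype.card_sum, Fintype.card_prod]
  ring

variable {m n : ℕ}

lemma adj_mem_SV {s : Fin n → Fin m} {u v : Vtx m}
    (h : (TheGraph s).Adj u v) : u ∈ SV s ∧ v ∈ SV s := by
  rw [TheGraph, tree_adj] at h
  obtain ⟨hne, h | h⟩ := h <;> rcases u with _ | d | ⟨i, d⟩ | i <;>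
      rcases v with _ | d' | ⟨i', d'⟩ | i' <;>
      simp_all [rel, mem_SV] <;> first | omega | (obtain ⟨rfl, h⟩ := h; omega)

lemma swapV_image_SV {s : Fin n → Fin m} {e : Vtx m × Vtx m}
    (h1 : e.1 ∈ SV s) (h2 : e.2 ∈ SV s) :
    (SV s).image (swapV e) = SV s := by
  apply Finset.eq_of_subset_of_card_le
  · intro v hv
    simp only [Finset.mem_image] at hv
    obtain ⟨w, hw, rfl⟩ := hv
    unfold swapV
    split_ifs <;> assumption
  · rw [Finset.card_image_of_injective _ (by rw [swapV_eq]; exact (Equiv.swap _ _).injective)]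

lemma applySwaps_cons {T V : Type*} [DecidableEq V] (e : V × V) (σ : List (V × V))
    (f : T → V) :
    applySwaps (e :: σ) f = applySwaps σ (fun t => swapV e (f t)) := rfl

variable {m n : ℕ}

/-- The total potential of a placement. -/
def Phi (f : Tok m n → Vtx m) : ℤ :=
  ∑ t : Tok m n, sgn t * hgt (kk m n) (f t)

/-- The per-step contrary-move count of token `t` for edge `e` from placement `f`. -/
def stepC (t : Tok m n) (e : Vtx m × Vtx m) (f : Tok m n → Vtx m) : ℕ :=
  (if f t = e.1 ∧ isContrary t e.1 e.2 = true then 1 else 0) +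
    (if f t = e.2 ∧ isContrary t e.2 e.1 = true then 1 else 0)

lemma cCount_cons (t : Tok m n) (e : Vtx m × Vtx m) (rest : List (Vtx m × Vtx m))
    (f : Tok m n → Vtx m) :
    cCount t (e :: rest) f = stepC t e f + cCount t rest (fun t' => swapV e (f t')) := rfl

lemma step_lemma {s : Fin n → Fin m} {f : Tok m n → Vtx m} {e : Vtx m × Vtx m}
    (hinj : Function.Injective f) (himg : Finset.image f Finset.univ = SV s)
    (hadj : (TheGraph s).Adj e.1 e.2) :
    Phi (fun t => swapV e (f t)) = Phi f + 2 * (∑ t : Tok m n, (stepC t e f : ℤ)) - 2 := by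
  obtain ⟨hu, hv⟩ := adj_mem_SV hadj
  rw [← himg] at hu hv
  simp only [Finset.mem_image, Finset.mem_univ, true_and] at hu hv
  obtain ⟨tu, htu⟩ := hu
  obtain ⟨tv, htv⟩ := hv
  have hne : e.1 ≠ e.2 := hadj.ne
  have htne : tu ≠ tv := fun h => hne (htu ▸ htv ▸ congrArg f h)
  have hfu : ∀ t, f t = e.1 ↔ t = tu := fun t =>
    ⟨fun h => hinj (h.trans htu.symm), fun h => h ▸ htu⟩
  have hfv : ∀ t, f t = e.2 ↔ t = tv := fun t =>
    ⟨fun h => hinj (h.trans htv.symm), fun h => h ▸ htv⟩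
  have hadj' : (TheGraph s).Adj e.2 e.1 := hadj.symm
  have key : ∀ t : Tok m n,
      sgn t * hgt (kk m n) (swapV e (f t)) - sgn t * hgt (kk m n) (f t) =
        (if t = tu then (if isContrary t e.1 e.2 then 1 else -1)
         else if t = tv then (if isContrary t e.2 e.1 then 1 else -1) else 0) := by
    intro t
    by_cases h1 : t = tu
    · subst h1
      have : swapV e (f t) = e.2 := by simp [swapV, htu]
      rw [this, htu, if_pos rfl, ← contrary_val t hadj]; ring
    · by_cases h2 : t = tv
      · subst h2
        have : swapV e (f t) = e.1 := by
          simp [swapV, htv, Ne.symm hne]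
        rw [this, htv, if_neg h1, if_pos rfl, ← contrary_val t hadj']; ring
      · have hu' : f t ≠ e.1 := fun h => h1 ((hfu t).mp h)
        have hv' : f t ≠ e.2 := fun h => h2 ((hfv t).mp h)
        rw [if_neg h1, if_neg h2]
        simp [swapV, hu', hv']
  have hsum : Phi (fun t => swapV e (f t)) - Phi f =
      (if isContrary tu e.1 e.2 then (1:ℤ) else -1) +
        (if isContrary tv e.2 e.1 then (1:ℤ) else -1) := by
    rw [Phi, Phi, ← Finset.sum_sub_distrib]
    rw [Finset.sum_congr rfl (fun t _ => key t)]
    rw [Finset.sum_eq_add_of_mem tu tv (Finset.mem_univ _) (Finset.mem_univ _) htne]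
    · rw [if_pos rfl, if_neg htne.symm, if_pos rfl]
    · intro t _ ⟨h1, h2⟩
      rw [if_neg h1, if_neg h2]
  have hcnt : (∑ t : Tok m n, (stepC t e f : ℤ)) =
      (if isContrary tu e.1 e.2 then (1:ℤ) else 0) +
        (if isContrary tv e.2 e.1 then (1:ℤ) else 0) := by
    simp only [stepC, Nat.cast_add]
    rw [Finset.sum_add_distrib]
    congr 1
    · rw [Finset.sum_eq_single tu]
      · simp only [htu, true_and]
        split_ifs <;> simp
      · intro t _ ht
        have : ¬ (f t = e.1) := fun h => ht ((hfu t).mp h)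
        simp [this]
      · simp
    · rw [Finset.sum_eq_single tv]
      · simp only [htv, true_and]
        split_ifs <;> simp
      · intro t _ ht
        have : ¬ (f t = e.2) := fun h => ht ((hfv t).mp h)
        simp [this]
      · simp
  rw [hcnt]
  have := hsum
  split_ifs at this ⊢ <;> linarith

lemma key_induction {s : Fin n → Fin m} (σ : List (Vtx m × Vtx m))
    (hedges : ∀ e ∈ σ, (TheGraph s).Adj e.1 e.2) :
    ∀ f : Tok m n → Vtx m, Function.Injective f →
      Finset.image f Finset.univ = SV s →
      2 * (σ.length : ℤ) + Phi (applySwaps σ f) =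
        Phi f + 2 * ∑ t : Tok m n, (cCount t σ f : ℤ) := by
  induction σ with
  | nil => intro f _ _; simp [applySwaps, cCount]
  | cons e rest ih =>
    intro f hinj himg
    have hadj : (TheGraph s).Adj e.1 e.2 := hedges e List.mem_cons_self
    have hedges' : ∀ e' ∈ rest, (TheGraph s).Adj e'.1 e'.2 :=
      fun e' h => hedges e' (List.mem_cons_of_mem e h)
    have hinj' : Function.Injective (fun t => swapV e (f t)) := by
      rw [swapV_eq]
      exact (Equiv.swap e.1 e.2).injective.comp hinj
    have himg' : Finset.image (fun t => swapV e (f t)) Finset.univ = SV s := by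
      have : Finset.image (fun t => swapV e (f t)) Finset.univ =
          (Finset.image f Finset.univ).image (swapV e) := by
        rw [Finset.image_image]; rfl
      rw [this, himg]
      exact swapV_image_SV (adj_mem_SV hadj).1 (adj_mem_SV hadj).2
    have hstep := step_lemma (s := s) hinj himg hadj
    have ihh := ih hedges' _ hinj' himg'
    rw [applySwaps_cons]
    simp only [cCount_cons, Nat.cast_add, Finset.sum_add_distrib, List.length_cons]
    push_cast
    linarith

variable {m n : ℕ}

/-- Prefix sums of block sizes in slot gadget `i`. -/
def oq (s : Fin n → Fin m) (i : Fin m) (b : ℕ) : ℕ :=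
  ∑ j' ∈ Finset.univ.filter (fun j' : Fin n => j'.val < b),
    (kk' m n + if s j' = i then kk m n else 0)

lemma offQ_eq (s : Fin n → Fin m) (i : Fin m) (j : Fin n) :
    offQ s i j = oq s i j.val := rfl

lemma oq_mono (s : Fin n → Fin m) (i : Fin m) {b b' : ℕ} (h : b ≤ b') :
    oq s i b ≤ oq s i b' := by
  apply Finset.sum_le_sum_of_subset
  intro j hj
  simp only [Finset.mem_filter, Finset.mem_univ, true_and] at *
  omega

lemma oq_succ (s : Fin n → Fin m) (i : Fin m) (j : Fin n) :
    oq s i (j.val + 1) = oq s i j.val + (kk' m n + if s j = i then kk m n else 0) := by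
  have : Finset.univ.filter (fun j' : Fin n => j'.val < j.val + 1) =
      insert j (Finset.univ.filter (fun j' : Fin n => j'.val < j.val)) := by
    ext j'
    simp only [Finset.mem_filter, Finset.mem_univ, true_and, Finset.mem_insert]
    constructor
    · intro h
      rcases Nat.lt_or_ge j'.val j.val with h' | h'
      · exact Or.inr h'
      · exact Or.inl (Fin.ext (by omega))
    · rintro (rfl | h) <;> omega
  rw [oq, this, Finset.sum_insert (by simp)]
  rw [oq]; ring

lemma oq_top (s : Fin n → Fin m) (i : Fin m) : oq s i n = lenSlot s i := by
  have : Finset.univ.filter (fun j' : Fin n => j'.val < n) = Finset.univ := by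
    ext j'; simp [j'.isLt]
  rw [oq, this, lenSlot, Finset.sum_add_distrib]
  simp only [Finset.sum_const, Finset.card_univ, Fintype.card_fin, smul_eq_mul,
    mul_one, Finset.sum_ite_eq]
  rw [Finset.sum_ite, Finset.sum_const, Finset.sum_const]
  simp only [smul_eq_mul, mul_one, mul_zero, add_zero, cnt]
  ring

lemma tOffP_add (s : Fin n → Fin m) (i : Fin m) (j : Fin n) :
    tOffP s i j + oq s i (j.val + 1) = lenSlot s i := by
  rw [← oq_top s i, tOffP, oq, oq]
  rw [← Finset.sum_filter_add_sum_filter_not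
    (Finset.univ.filter (fun j' : Fin n => j'.val < n))
    (fun j' : Fin n => j.val < j'.val)]
  congr 1
  · congr 1
    ext j'; simp [j'.isLt]
  · congr 1
    ext j'; simp only [Finset.mem_filter, Finset.mem_univ, true_and]
    omega

variable {m n : ℕ}

/-- The generic-case value of `rho`. -/
def grho (s : Fin n → Fin m) (i : Fin m) (j : Fin n) : ℕ :=
  (if (nxt s j).isSome then 1 else 0) +
    (Finset.univ.filter fun i' : Fin m =>
      i'.val < i.val ∧ i' ≠ s j ∧ some i' ≠ nxt s j).card

lemma rho_def (s : Fin n → Fin m) (i : Fin m) (j : Fin n) :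
    rho s i j = if some i = nxt s j then 0 else if i = s j then m - 1 else grho s i j := rfl

lemma nxt_ne_sj {s : Fin n → Fin m}
    (hcons : ∀ (j : Fin n) (h : j.val + 1 < n), s j ≠ s ⟨j.val + 1, h⟩)
    {j : Fin n} {i0 : Fin m} (h : nxt s j = some i0) : i0 ≠ s j := by
  rw [nxt] at h
  split_ifs at h with h'
  have h := Option.some.inj h
  exact fun he => hcons j h' (h ▸ he.symm)

/-- The generic-case value of `rho` is at most `m - 2`. -/
lemma grho_le {s : Fin n → Fin m}
    (hcons : ∀ (j : Fin n) (h : j.val + 1 < n), s j ≠ s ⟨j.val + 1, h⟩)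
    {i : Fin m} {j : Fin n} (h1 : some i ≠ nxt s j) (h2 : i ≠ s j) :
    grho s i j ≤ m - 2 := by
  rw [grho]
  rcases hn : nxt s j with _ | i0
  · simp only [Option.isSome_none, Bool.false_eq_true, if_false, zero_add]
    have hsub : (Finset.univ.filter fun i' : Fin m =>
        i'.val < i.val ∧ i' ≠ s j ∧ some i' ≠ (none : Option (Fin m))) ⊆
        Finset.univ \ {i, s j} := by
      intro i' hi'
      simp only [Finset.mem_filter, Finset.mem_univ, true_and] at hi'
      simp only [Finset.mem_sdiff, Finset.mem_univ, true_and, Finset.mem_insert,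
        Finset.mem_singleton]
      push_neg
      exact ⟨Fin.ne_of_val_ne (Nat.ne_of_lt hi'.1), hi'.2.1⟩
    have hle := Finset.card_le_card hsub
    rw [Finset.card_sdiff_of_subset (by simp)] at hle
    have hc : ({i, s j} : Finset (Fin m)).card = 2 := by
      rw [Finset.card_insert_of_notMem (by simpa using h2), Finset.card_singleton]
    rw [hc, Finset.card_univ, Fintype.card_fin] at hle
    exact hle
  · have hi0 : i0 ≠ s j := nxt_ne_sj hcons hn
    have hii0 : i ≠ i0 := fun he => h1 (by rw [hn, he])
    simp only [Option.isSome_some, if_true]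
    have hsub : (Finset.univ.filter fun i' : Fin m =>
        i'.val < i.val ∧ i' ≠ s j ∧ some i' ≠ some i0) ⊆
        Finset.univ \ {i, s j, i0} := by
      intro i' hi'
      simp only [Finset.mem_filter, Finset.mem_univ, true_and] at hi'
      simp only [Finset.mem_sdiff, Finset.mem_univ, true_and, Finset.mem_insert,
        Finset.mem_singleton]
      push_neg
      refine ⟨Fin.ne_of_val_ne (Nat.ne_of_lt hi'.1), hi'.2.1, ?_⟩
      exact Option.some.inj.mt hi'.2.2 |> fun hx => fun he => hi'.2.2 (congrArg some he)
    have hle := Finset.card_le_card hsub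
    rw [Finset.card_sdiff_of_subset (by simp)] at hle
    have hc : ({i, s j, i0} : Finset (Fin m)).card = 3 := by
      rw [Finset.card_insert_of_notMem (by simp [h2, hii0]),
        Finset.card_insert_of_notMem (by simpa using hi0.symm), Finset.card_singleton]
    rw [hc, Finset.card_univ, Fintype.card_fin] at hle
    have hm : 3 ≤ m := by
      have h3 := Finset.card_le_univ ({i, s j, i0} : Finset (Fin m))
      rw [hc] at h3
      simpa using h3
    omega

lemma rho_lt {s : Fin n → Fin m}
    (hcons : ∀ (j : Fin n) (h : j.val + 1 < n), s j ≠ s ⟨j.val + 1, h⟩)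
    (i : Fin m) (j : Fin n) : rho s i j < m := by
  have hm : 0 < m := i.pos
  rw [rho_def]
  split_ifs with h1 h2
  · exact hm
  · omega
  · have := grho_le hcons h1 h2
    omega

lemma grho_strict_mono {s : Fin n → Fin m} {i i' : Fin m} {j : Fin n}
    (h1 : some i ≠ nxt s j) (h2 : i ≠ s j) (hlt : i.val < i'.val) :
    grho s i j < grho s i' j := by
  rw [grho, grho]
  have hsub : insert i (Finset.univ.filter fun i'' : Fin m =>
      i''.val < i.val ∧ i'' ≠ s j ∧ some i'' ≠ nxt s j) ⊆
      (Finset.univ.filter fun i'' : Fin m =>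
        i''.val < i'.val ∧ i'' ≠ s j ∧ some i'' ≠ nxt s j) := by
    intro a ha
    simp only [Finset.mem_insert, Finset.mem_filter, Finset.mem_univ, true_and] at ha ⊢
    rcases ha with rfl | ha
    · exact ⟨hlt, h2, h1⟩
    · exact ⟨by omega, ha.2⟩
  have := Finset.card_le_card hsub
  rw [Finset.card_insert_of_notMem (by simp)] at this
  omega

lemma rho_inj {s : Fin n → Fin m}
    (hcons : ∀ (j : Fin n) (h : j.val + 1 < n), s j ≠ s ⟨j.val + 1, h⟩)
    {i i' : Fin m} {j : Fin n} (h : rho s i j = rho s i' j) : i = i' := by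
  rcases Nat.lt_or_ge m 2 with hm | hm
  · have := i.pos
    have h1 : i.val = 0 := by omega
    have h2 : i'.val = 0 := by omega
    exact Fin.ext (h1.trans h2.symm)
  rw [rho_def, rho_def] at h
  by_cases a1 : some i = nxt s j <;> by_cases b1 : some i' = nxt s j
  · exact Option.some.inj (a1.trans b1.symm)
  · rw [if_pos a1, if_neg b1] at h
    by_cases b2 : i' = s j
    · rw [if_pos b2] at h; omega
    · rw [if_neg b2] at h
      rw [grho] at h
      rcases hn : nxt s j with _ | i0
      · exact absurd (a1.trans hn) (by simp)
      · rw [hn] at h; simp at h <;> omega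
  · rw [if_neg a1, if_pos b1] at h
    by_cases a2 : i = s j
    · rw [if_pos a2] at h; omega
    · rw [if_neg a2] at h
      rw [grho] at h
      rcases hn : nxt s j with _ | i0
      · exact absurd (b1.trans hn) (by simp)
      · rw [hn] at h; simp at h <;> omega
  · rw [if_neg a1, if_neg b1] at h
    by_cases a2 : i = s j <;> by_cases b2 : i' = s j
    · exact a2.trans b2.symm
    · rw [if_pos a2, if_neg b2] at h
      have := grho_le hcons b1 b2
      omega
    · rw [if_neg a2, if_pos b2] at h
      have := grho_le hcons a1 a2
      omega
    · rw [if_neg a2, if_neg b2] at h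
      rcases Nat.lt_trichotomy i.val i'.val with hlt | heq | hlt
      · exact absurd h (Nat.ne_of_lt (grho_strict_mono a1 a2 hlt))
      · exact Fin.ext heq
      · exact absurd h.symm (Nat.ne_of_lt (grho_strict_mono b1 b2 hlt))

variable {m n : ℕ} {s : Fin n → Fin m}

lemma lenOrd_eq : lenOrd m n = n * (kk m n + m * kk' m n) := by
  rw [lenOrd]; ring

lemma x_init_lt (j : Fin n) (a : Fin (kk m n)) :
    j.val * (kk m n + m * kk' m n) + a.val < lenOrd m n := by
  rw [lenOrd_eq]
  have h1 : a.val < kk m n + m * kk' m n := lt_of_lt_of_le a.isLt (Nat.le_add_right _ _)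
  have h2 : j.val + 1 ≤ n := j.isLt
  calc j.val * (kk m n + m * kk' m n) + a.val
      < (j.val + 1) * (kk m n + m * kk' m n) := by rw [add_mul, one_mul]; omega
    _ ≤ n * (kk m n + m * kk' m n) := Nat.mul_le_mul_right _ h2

lemma p_init_lt
    (hcons : ∀ (j : Fin n) (h : j.val + 1 < n), s j ≠ s ⟨j.val + 1, h⟩)
    (i : Fin m) (j : Fin n) (a : Fin (kk' m n)) :
    j.val * (kk m n + m * kk' m n) + kk m n + rho s i j * kk' m n + a.val < lenOrd m n := by
  rw [lenOrd_eq]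
  have hr : rho s i j + 1 ≤ m := rho_lt hcons i j
  have h1 : rho s i j * kk' m n + a.val < m * kk' m n := by
    calc rho s i j * kk' m n + a.val < rho s i j * kk' m n + kk' m n := by
          have := a.isLt; omega
      _ = (rho s i j + 1) * kk' m n := by ring
      _ ≤ m * kk' m n := Nat.mul_le_mul_right _ hr
  have h2 : j.val + 1 ≤ n := j.isLt
  calc j.val * (kk m n + m * kk' m n) + kk m n + rho s i j * kk' m n + a.val
      < (j.val + 1) * (kk m n + m * kk' m n) := by rw [add_mul, one_mul]; omega
    _ ≤ n * (kk m n + m * kk' m n) := Nat.mul_le_mul_right _ h2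

lemma y_init_lt (j : Fin n) (a : Fin (kk m n)) :
    offQ s (s j) j + a.val < lenSlot s (s j) := by
  have h1 := oq_succ s (s j) j
  have h2 := oq_mono s (s j) (show j.val + 1 ≤ n from j.isLt)
  rw [oq_top] at h2
  rw [offQ_eq]
  rw [if_pos rfl] at h1
  have := a.isLt
  omega

lemma q_init_lt (i : Fin m) (j : Fin n) (a : Fin (kk' m n)) :
    offQ s i j + (if s j = i then kk m n else 0) + a.val < lenSlot s i := by
  have h1 := oq_succ s i j
  have h2 := oq_mono s i (show j.val + 1 ≤ n from j.isLt)
  rw [oq_top] at h2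
  rw [offQ_eq]
  have := a.isLt
  omega

lemma x_tgt_lt (j : Fin n) (a : Fin (kk m n)) :
    tOffP s (s j) j + kk' m n + (kk m n - 1 - a.val) < lenSlot s (s j) := by
  have h1 := tOffP_add s (s j) j
  have h2 := oq_succ s (s j) j
  rw [if_pos rfl] at h2
  have := a.isLt
  omega

lemma p_tgt_lt (i : Fin m) (j : Fin n) (a : Fin (kk' m n)) :
    tOffP s i j + (kk' m n - 1 - a.val) < lenSlot s i := by
  have h1 := tOffP_add s i j
  have h2 := oq_succ s i j
  have := a.isLt
  omega

lemma y_tgt_lt (j : Fin n) (a : Fin (kk m n)) :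
    lenOrd m n - 1 - (j.val * (kk m n + m * kk' m n) + a.val) < lenOrd m n := by
  have := x_init_lt (m := m) j a
  omega

lemma q_tgt_lt
    (hcons : ∀ (j : Fin n) (h : j.val + 1 < n), s j ≠ s ⟨j.val + 1, h⟩)
    (i : Fin m) (j : Fin n) (a : Fin (kk' m n)) :
    lenOrd m n - 1 -
      (j.val * (kk m n + m * kk' m n) + kk m n + rho s i j * kk' m n + a.val) <
      lenOrd m n := by
  have := p_init_lt hcons i j a
  omega

lemma init_mem_SV
    (hcons : ∀ (j : Fin n) (h : j.val + 1 < n), s j ≠ s ⟨j.val + 1, h⟩)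
    (t : Tok m n) : initTok s t ∈ SV s := by
  rcases t with (_ | i) | (⟨j, a⟩ | (⟨j, a⟩ | (⟨i, j, a⟩ | ⟨i, j, a⟩)))
  · simp [initTok, mem_SV]
  · simp [initTok, mem_SV]
  · rw [initTok, mem_SV]; exact x_init_lt j a
  · rw [initTok, mem_SV]; exact y_init_lt j a
  · rw [initTok, mem_SV]; exact p_init_lt hcons i j a
  · rw [initTok, mem_SV]; exact q_init_lt i j a

lemma tgt_mem_SV
    (hcons : ∀ (j : Fin n) (h : j.val + 1 < n), s j ≠ s ⟨j.val + 1, h⟩)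
    (π : Equiv.Perm (Option (Fin m))) (t : Tok m n) : tgtTok s π t ∈ SV s := by
  rcases t with (_ | i) | (⟨j, a⟩ | (⟨j, a⟩ | (⟨i, j, a⟩ | ⟨i, j, a⟩)))
  · rw [tgtTok]; rcases π none with _ | i' <;> simp [mem_SV]
  · rw [tgtTok]; rcases π (some i) with _ | i' <;> simp [mem_SV]
  · rw [tgtTok, mem_SV]; exact x_tgt_lt j a
  · rw [tgtTok, mem_SV]; exact y_tgt_lt j a
  · rw [tgtTok, mem_SV]; exact p_tgt_lt i j a
  · rw [tgtTok, mem_SV]; exact q_tgt_lt hcons i j a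

variable {m n : ℕ} {s : Fin n → Fin m}

lemma block_inj {B j j₂ a a₂ : ℕ} (ha : a < B) (ha₂ : a₂ < B)
    (h : j * B + a = j₂ * B + a₂) : j = j₂ ∧ a = a₂ := by
  have hj : j = j₂ := by
    rcases Nat.lt_trichotomy j j₂ with h' | h' | h'
    · exfalso
      have : j * B + a < j₂ * B + a₂ := by
        calc j * B + a < (j + 1) * B := by rw [add_mul, one_mul]; omega
          _ ≤ j₂ * B := Nat.mul_le_mul_right _ h'
          _ ≤ j₂ * B + a₂ := Nat.le_add_right _ _
      omega
    · exact h'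
    · exfalso
      have : j₂ * B + a₂ < j * B + a := by
        calc j₂ * B + a₂ < (j₂ + 1) * B := by rw [add_mul, one_mul]; omega
          _ ≤ j * B := Nat.mul_le_mul_right _ h'
          _ ≤ j * B + a := Nat.le_add_right _ _
      omega
  subst hj
  exact ⟨rfl, by omega⟩

/-- Positions within distinct blocks of a slot gadget are distinct. -/
lemma oq_block_inj {i : Fin m} {j j₂ : Fin n} {d d₂ : ℕ}
    (hd : d < kk' m n + (if s j = i then kk m n else 0))
    (hd₂ : d₂ < kk' m n + (if s j₂ = i then kk m n else 0))
    (h : oq s i j.val + d = oq s i j₂.val + d₂) : j = j₂ ∧ d = d₂ := by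
  have hj : j = j₂ := by
    rcases Nat.lt_trichotomy j.val j₂.val with h' | h' | h'
    · exfalso
      have h1 := oq_succ s i j
      have h2 := oq_mono s i (show j.val + 1 ≤ j₂.val from h')
      omega
    · exact Fin.ext h'
    · exfalso
      have h1 := oq_succ s i j₂
      have h2 := oq_mono s i (show j₂.val + 1 ≤ j.val from h')
      omega
  subst hj
  exact ⟨rfl, by omega⟩

lemma p_inner_lt
    (hcons : ∀ (j : Fin n) (h : j.val + 1 < n), s j ≠ s ⟨j.val + 1, h⟩)
    (i : Fin m) (j : Fin n) (a : Fin (kk' m n)) :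
    kk m n + rho s i j * kk' m n + a.val < kk m n + m * kk' m n := by
  have hr : rho s i j + 1 ≤ m := rho_lt hcons i j
  have h1 : rho s i j * kk' m n + a.val < (rho s i j + 1) * kk' m n := by
    have := a.isLt; rw [add_mul, one_mul]; omega
  have h2 : (rho s i j + 1) * kk' m n ≤ m * kk' m n := Nat.mul_le_mul_right _ hr
  omega

lemma initTok_inj
    (hcons : ∀ (j : Fin n) (h : j.val + 1 < n), s j ≠ s ⟨j.val + 1, h⟩) :
    Function.Injective (initTok s) := by
  intro t t' h
  have hB : kk m n ≤ kk m n + m * kk' m n := Nat.le_add_right _ _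
  rcases t with (_ | i) | (⟨j, a⟩ | (⟨j, a⟩ | (⟨i, j, a⟩ | ⟨i, j, a⟩))) <;>
    rcases t' with (_ | i') | (⟨j', a'⟩ | (⟨j', a'⟩ | (⟨i', j', a'⟩ | ⟨i', j', a'⟩))) <;>
    simp only [initTok] at h <;>
    try (solve | cases h)
  · rfl
  · -- nook
    injection h with h1
    rw [h1]
  · -- x/x
    injection h with h1
    obtain ⟨hj, ha⟩ := block_inj (lt_of_lt_of_le a.isLt hB) (lt_of_lt_of_le a'.isLt hB) h1
    rw [show j = j' from Fin.ext hj, show a = a' from Fin.ext ha]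
  · -- x/p
    exfalso
    injection h with h1
    have h2 : j.val * (kk m n + m * kk' m n) + a.val =
        j'.val * (kk m n + m * kk' m n) + (kk m n + rho s i' j' * kk' m n + a'.val) := by
      omega
    obtain ⟨_, ha⟩ := block_inj (lt_of_lt_of_le a.isLt hB) (p_inner_lt hcons i' j' a') h2
    have := a.isLt
    omega
  · -- y/y
    injection h with h1 h2
    rw [← h1, offQ_eq, offQ_eq] at h2
    obtain ⟨hj, ha⟩ := oq_block_inj (i := s j)
      (by rw [if_pos rfl]; have := a.isLt; omega)
      (by rw [if_pos h1.symm]; have := a'.isLt; omega) h2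
    rw [hj, show a = a' from Fin.ext ha]
  · -- y/q
    exfalso
    injection h with h1 h2
    subst h1
    rw [offQ_eq, offQ_eq] at h2
    have h3 : oq s (s j) j.val + a.val =
        oq s (s j) j'.val + ((if s j' = s j then kk m n else 0) + a'.val) := by omega
    obtain ⟨hj, ha⟩ := oq_block_inj (i := s j)
      (by rw [if_pos rfl]; have := a.isLt; omega)
      (by have := a'.isLt; omega) h3
    subst hj
    rw [if_pos rfl] at ha
    have := a.isLt
    omega
  · -- p/x
    exfalso
    injection h with h1
    have h2 : j'.val * (kk m n + m * kk' m n) + a'.val =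
        j.val * (kk m n + m * kk' m n) + (kk m n + rho s i j * kk' m n + a.val) := by
      omega
    obtain ⟨_, ha⟩ := block_inj (lt_of_lt_of_le a'.isLt hB) (p_inner_lt hcons i j a) h2
    have := a'.isLt
    omega
  · -- p/p
    injection h with h1
    have h2 : j.val * (kk m n + m * kk' m n) + (kk m n + rho s i j * kk' m n + a.val) =
        j'.val * (kk m n + m * kk' m n) +
          (kk m n + rho s i' j' * kk' m n + a'.val) := by omega
    obtain ⟨hj, ha⟩ := block_inj (p_inner_lt hcons i j a) (p_inner_lt hcons i' j' a') h2
    have hj' : j = j' := Fin.ext hj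
    subst hj'
    have h3 : rho s i j * kk' m n + a.val = rho s i' j * kk' m n + a'.val := by omega
    obtain ⟨hr, ha'⟩ := block_inj a.isLt a'.isLt h3
    have : i = i' := rho_inj hcons hr
    subst this
    rw [show a = a' from Fin.ext ha']
  · -- q/y
    exfalso
    injection h with h1 h2
    subst h1
    rw [offQ_eq, offQ_eq] at h2
    have h3 : oq s (s j') j'.val + a'.val =
        oq s (s j') j.val + ((if s j = s j' then kk m n else 0) + a.val) := by omega
    obtain ⟨hj, ha⟩ := oq_block_inj (i := s j')
      (by have := a.isLt; omega)
      (by rw [if_pos rfl]; have := a'.isLt; omega) h3.symm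
    subst hj
    simp at ha
    have := a'.isLt
    omega
  · -- q/q
    injection h with h1 h2
    subst h1
    rw [offQ_eq, offQ_eq] at h2
    have h3 : oq s i j.val + ((if s j = i then kk m n else 0) + a.val) =
        oq s i j'.val + ((if s j' = i then kk m n else 0) + a'.val) := by omega
    obtain ⟨hj, ha⟩ := oq_block_inj (i := i)
      (by have := a.isLt; omega)
      (by have := a'.isLt; omega) h3
    subst hj
    rw [show a = a' from Fin.ext (by omega)]

variable {m n : ℕ} {s : Fin n → Fin m}

lemma image_init
    (hcons : ∀ (j : Fin n) (h : j.val + 1 < n), s j ≠ s ⟨j.val + 1, h⟩) :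
    Finset.image (initTok s) Finset.univ = SV s := by
  apply Finset.eq_of_subset_of_card_le
  · intro v hv
    simp only [Finset.mem_image, Finset.mem_univ, true_and] at hv
    obtain ⟨t, rfl⟩ := hv
    exact init_mem_SV hcons t
  · rw [Finset.card_image_of_injective _ (initTok_inj hcons), Finset.card_univ,
      card_Tok s]

/-- Walk from a slot vertex to the root, of length `d + 1`. -/
def slotWalk (len : Fin m → ℕ) (L k : ℕ) (i : Fin m) :
    (d : ℕ) → d < len i → (Tree len L k).Walk (.slot i d) .root
  | 0, h => SimpleGraph.Walk.cons
      (by rw [tree_adj]; exact ⟨by simp, Or.inr ⟨rfl, h⟩⟩) SimpleGraph.Walk.nil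
  | d + 1, h => SimpleGraph.Walk.cons
      (show (Tree len L k).Adj (.slot i (d+1)) (.slot i d) by
        rw [tree_adj]
        exact ⟨by simp, Or.inr ⟨rfl, rfl, h⟩⟩)
      (slotWalk len L k i d (by omega))

lemma slotWalk_length (len : Fin m → ℕ) (L k : ℕ) (i : Fin m) (d : ℕ) (h : d < len i) :
    (slotWalk len L k i d h).length = d + 1 := by
  induction d with
  | zero => rfl
  | succ d ih => simp [slotWalk, ih (by omega)]

/-- Walk from an ordering vertex to the root, of length `d + 1`. -/
def ordWalk (len : Fin m → ℕ) (L k : ℕ) :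
    (d : ℕ) → d < L → (Tree len L k).Walk (.ord d) .root
  | 0, h => SimpleGraph.Walk.cons
      (by rw [tree_adj]; exact ⟨by simp, Or.inr ⟨rfl, h⟩⟩) SimpleGraph.Walk.nil
  | d + 1, h => SimpleGraph.Walk.cons
      (show (Tree len L k).Adj (.ord (d+1)) (.ord d) by
        rw [tree_adj]
        exact ⟨by simp, Or.inr ⟨rfl, h⟩⟩)
      (ordWalk len L k d (by omega))

lemma ordWalk_length (len : Fin m → ℕ) (L k : ℕ) (d : ℕ) (h : d < L) :
    (ordWalk len L k d h).length = d + 1 := by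
  induction d with
  | zero => rfl
  | succ d ih => simp [ordWalk, ih (by omega)]

lemma walk_length_lower {len : Fin m → ℕ} {L k : ℕ} {u v : Vtx m}
    (w : (Tree len L k).Walk u v) :
    (hgt k u - hgt k v).natAbs ≤ w.length := by
  induction w with
  | nil => simp
  | cons hadj w ih =>
    rename_i a b c
    have := h_step hadj
    rw [SimpleGraph.Walk.length_cons]
    have h1 : (hgt k a - hgt k b).natAbs ≤ 1 := by
      rw [this]; split_ifs <;> simp
    calc (hgt k a - hgt k c).natAbs
        ≤ (hgt k a - hgt k b).natAbs + (hgt k b - hgt k c).natAbs := by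
          have := Int.natAbs_add_le (hgt k a - hgt k b) (hgt k b - hgt k c)
          simpa using this
      _ ≤ 1 + w.length := by omega
    omega

lemma dist_slot_ord {i : Fin m} {d d' : ℕ}
    (hd : d < lenSlot s i) (hd' : d' < lenOrd m n) :
    (TheGraph s).dist (.slot i d) (.ord d') = (d + 1) + (d' + 1) := by
  have hw : (TheGraph s).Walk (.slot i d) (.ord d') :=
    (slotWalk (lenSlot s) (lenOrd m n) (kk m n) i d hd).append
      (ordWalk (lenSlot s) (lenOrd m n) (kk m n) d' hd').reverse
  apply le_antisymm
  · have h := SimpleGraph.dist_le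
      ((slotWalk (lenSlot s) (lenOrd m n) (kk m n) i d hd).append
        (ordWalk (lenSlot s) (lenOrd m n) (kk m n) d' hd').reverse)
    rwa [SimpleGraph.Walk.length_append, SimpleGraph.Walk.length_reverse,
      slotWalk_length, ordWalk_length] at h
  · obtain ⟨w, hwd⟩ :=
      (SimpleGraph.Reachable.exists_walk_length_eq_dist (⟨hw⟩ : (TheGraph s).Reachable _ _))
    have hlow : (hgt (kk m n) (.slot i d) - hgt (kk m n) (.ord d')).natAbs ≤ w.length :=
      walk_length_lower (k := kk m n) w
    rw [hwd] at hlow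
    simp only [hgt] at hlow
    omega

variable {m n : ℕ} {s : Fin n → Fin m}

lemma tok_dd
    (hcons : ∀ (j : Fin n) (h : j.val + 1 < n), s j ≠ s ⟨j.val + 1, h⟩)
    (π : Equiv.Perm (Option (Fin m))) (t : NonItem m n) :
    sgn (Sum.inr t : Tok m n) *
        (hgt (kk m n) (initTok s (Sum.inr t)) - hgt (kk m n) (tgtTok s π (Sum.inr t))) =
      (dd s π (Sum.inr t) : ℤ) := by
  rcases t with ⟨j, a⟩ | (⟨j, a⟩ | (⟨i, j, a⟩ | ⟨i, j, a⟩))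
  · -- x token: init in ord, tgt in slot
    rw [dd, initTok, tgtTok]
    rw [SimpleGraph.dist_comm, dist_slot_ord (x_tgt_lt j a) (x_init_lt j a)]
    simp only [sgn, hgt]
    push_cast
    ring
  · -- y token: init in slot, tgt in ord
    rw [dd, initTok, tgtTok]
    rw [dist_slot_ord (y_init_lt j a) (y_tgt_lt j a)]
    simp only [sgn, hgt]
    push_cast
    ring
  · -- p token
    rw [dd, initTok, tgtTok]
    rw [SimpleGraph.dist_comm, dist_slot_ord (p_tgt_lt i j a) (p_init_lt hcons i j a)]
    simp only [sgn, hgt]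
    push_cast
    ring
  · -- q token
    rw [dd, initTok, tgtTok]
    rw [dist_slot_ord (q_init_lt i j a) (q_tgt_lt hcons i j a)]
    simp only [sgn, hgt]
    push_cast
    ring

lemma item_hgt_eq (π : Equiv.Perm (Option (Fin m))) (hπ0 : π none = none)
    (o : Option (Fin m)) :
    hgt (kk m n) (initTok s (Sum.inl o)) = hgt (kk m n) (tgtTok s π (Sum.inl o)) := by
  rcases o with _ | i
  · rw [initTok, tgtTok, hπ0]
  · rw [initTok, tgtTok]
    rcases hπ : π (some i) with _ | i'
    · exfalso
      have := π.injective (hπ.trans hπ0.symm)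
      simp at this
    · rfl

lemma phi_diff
    (hcons : ∀ (j : Fin n) (h : j.val + 1 < n), s j ≠ s ⟨j.val + 1, h⟩)
    (π : Equiv.Perm (Option (Fin m))) (hπ0 : π none = none) :
    Phi (initTok s) - Phi (tgtTok s π) =
      ∑ t : NonItem m n, (dd s π (Sum.inr t) : ℤ) := by
  rw [Phi, Phi, ← Finset.sum_sub_distrib, Fintype.sum_sum_type]
  have h1 : ∑ o : Option (Fin m),
      (sgn (Sum.inl o : Tok m n) * hgt (kk m n) (initTok s (Sum.inl o)) -
        sgn (Sum.inl o : Tok m n) * hgt (kk m n) (tgtTok s π (Sum.inl o))) = 0 := by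
    apply Finset.sum_eq_zero
    intro o _
    rw [item_hgt_eq π hπ0 o]
    ring
  rw [h1, zero_add]
  apply Finset.sum_congr rfl
  intro t _
  rw [← tok_dd hcons π t]
  ring

/-!
STATEMENT 6: For every swap sequence transforming the initial placement of the
constructed token swapping instance into its target placement, the total number of
moves — twice the number of swaps — equals `Σ_{t∈A} d_t + 2·Σ_t c_t`, where the
second sum ranges over all tokens.
-/
theorem total_moves_eq {m n : ℕ}
    (s : Fin n → Fin m) (π : Equiv.Perm (Option (Fin m)))
    (hπ0 : π none = none)
    (hocc : ∀ i : Fin m, ∃ j, s j = i)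
    (hcons : ∀ (j : Fin n) (h : j.val + 1 < n), s j ≠ s ⟨j.val + 1, h⟩)
    (σ : List (Vtx m × Vtx m))
    (hedges : ∀ e ∈ σ, (TheGraph s).Adj e.1 e.2)
    (hsol : applySwaps σ (initTok s) = tgtTok s π) :
    2 * σ.length =
      (∑ t : NonItem m n, dd s π (Sum.inr t)) +
        2 * ∑ t : Tok m n, cCount t σ (initTok s) := by
  have key := key_induction σ hedges (initTok s) (initTok_inj hcons) (image_init hcons)
  rw [hsol] at key
  have hphi := phi_diff hcons π hπ0
  have : (2 * σ.length : ℤ) =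
      (∑ t : NonItem m n, (dd s π (Sum.inr t) : ℤ)) +
        2 * ∑ t : Tok m n, (cCount t σ (initTok s) : ℤ) := by linarith
  exact_mod_cast this

end UnweightedTS
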